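/- Let v, J, Γ : ℝ → ℝ be functions such that: (a) v(y) ≥ J(y) for all y and v(0) = J(0); (b) J is differentiable at 0; (c) v − Γ is concave on ℝ; (d) Γ is differentiable at 0. Then v is differentiable at 0 and v'(0) = J'(0). -/

import Mathlib

open Filter Topology

/-- Envelope theorem: if `v ≥ J` with equality at `0`, `J` is differentiable
at `0`, `v − Γ` is concave and `Γ` is differentiable at `0`, then `v` is
differentiable at `0` with `v'(0) = J'(0)`. -/
theorem stmt5 (v J Γ : ℝ → ℝ)
    (hvJ : ∀ y, J y ≤ v y) (h0 : v 0 = J 0)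
    (hJ : DifferentiableAt ℝ J 0)
    (hconc : ConcaveOn ℝ Set.univ (fun y => v y - Γ y))
    (hΓ : DifferentiableAt ℝ Γ 0) :
    DifferentiableAt ℝ v 0 ∧ deriv v 0 = deriv J 0 := by
  set ψ : ℝ → ℝ := fun y => v y - Γ y with hψ
  set φ : ℝ → ℝ := fun y => J y - Γ y with hφdef
  set d : ℝ := deriv J 0 - deriv Γ 0 with hd
  have hφ : HasDerivAt φ d 0 := hJ.hasDerivAt.sub hΓ.hasDerivAt
  have hle : ∀ y, φ y ≤ ψ y := fun y => by
    simp only [hψ, hφdef]; linarith [hvJ y]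
  have heq : ψ 0 = φ 0 := by simp only [hψ, hφdef, h0]
  have hslope : Tendsto (slope φ 0) (𝓝[≠] 0) (𝓝 d) :=
    hasDerivAt_iff_tendsto_slope.mp hφ
  have hnegmap : Tendsto (fun y : ℝ => -y) (𝓝[≠] (0:ℝ)) (𝓝[≠] (0:ℝ)) := by
    have h1 : Tendsto (fun y : ℝ => -y) (𝓝 (0:ℝ)) (𝓝 (0:ℝ)) := by
      simpa using (continuous_neg.tendsto (0:ℝ))
    refine tendsto_nhdsWithin_of_tendsto_nhds_of_eventually_within _
      (h1.mono_left nhdsWithin_le_nhds) ?_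
    filter_upwards [self_mem_nhdsWithin] with y hy
    simp only [Set.mem_compl_iff, Set.mem_singleton_iff] at hy ⊢
    exact neg_ne_zero.mpr hy
  have hslope' : Tendsto (fun y => slope φ 0 (-y)) (𝓝[≠] 0) (𝓝 d) :=
    hslope.comp hnegmap
  -- key slope comparisons, for y > 0
  have hlow : ∀ y : ℝ, 0 < y → slope φ 0 y ≤ slope ψ 0 y := by
    intro y hy
    simp only [slope_def_field]
    exact div_le_div_of_nonneg_right (by linarith [hle y, heq]) (by linarith)
  have hup : ∀ y : ℝ, 0 < y → slope ψ 0 (-y) ≤ slope φ 0 (-y) := by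
    intro y hy
    simp only [slope_def_field]
    rw [div_le_div_right_of_neg (by linarith)]
    linarith [hle (-y), heq]
  have hmid : ∀ y : ℝ, 0 < y → slope ψ 0 y ≤ slope ψ 0 (-y) := by
    intro y hy
    have h := hconc.slope_anti_adjacent (Set.mem_univ (-y)) (Set.mem_univ y)
      (by linarith) hy
    simp only [slope_def_field]
    rw [show (-y - 0 : ℝ) = -(0 - -y) by ring,
      show ψ (-y) - ψ 0 = -(ψ 0 - ψ (-y)) by ring, neg_div_neg_eq]
    exact h
  have hψd : HasDerivAt ψ d 0 := by
    rw [hasDerivAt_iff_tendsto_slope]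
    have hmin : Tendsto (fun y => min (slope φ 0 y) (slope φ 0 (-y)))
        (𝓝[≠] 0) (𝓝 d) := by simpa using hslope.min hslope'
    have hmax : Tendsto (fun y => max (slope φ 0 y) (slope φ 0 (-y)))
        (𝓝[≠] 0) (𝓝 d) := by simpa using hslope.max hslope'
    refine tendsto_of_tendsto_of_tendsto_of_le_of_le' hmin hmax ?_ ?_
    · filter_upwards [self_mem_nhdsWithin] with y hy
      simp only [Set.mem_compl_iff, Set.mem_singleton_iff] at hy
      rcases lt_or_gt_of_ne hy with hneg | hpos
      · refine le_trans (min_le_right _ _) ?_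
        have h1 := hlow (-y) (by linarith)
        have h2 := hmid (-y) (by linarith)
        simp only [neg_neg] at h2
        exact h1.trans h2
      · exact le_trans (min_le_left _ _) (hlow y hpos)
    · filter_upwards [self_mem_nhdsWithin] with y hy
      simp only [Set.mem_compl_iff, Set.mem_singleton_iff] at hy
      rcases lt_or_gt_of_ne hy with hneg | hpos
      · refine le_trans ?_ (le_max_left _ _)
        have h1 := hup (-y) (by linarith)
        simp only [neg_neg] at h1
        exact h1
      · exact le_trans ((hmid y hpos).trans (hup y hpos)) (le_max_right _ _)
  have hv : HasDerivAt v (deriv J 0) 0 := by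
    have h := hψd.add hΓ.hasDerivAt
    have hveq : (ψ + Γ) = v := by funext y; simp [hψ]
    rw [hveq] at h
    rw [hd, sub_add_cancel] at h
    exact h
  exact ⟨hv.differentiableAt, hv.deriv⟩
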